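/- Let a, b be integers, not both zero, such that 2^a · 3^b ≠ 1 (which is automatic by unique factorization). Writing q = 2^a · 3^b − 1 ∈ ℚ, the product |q| · |q|₂ · |q|₃ of the real absolute value, the 2-adic absolute value and the 3-adic absolute value of q is a positive integer coprime to 6. -/

import Mathlib

lemma padicNorm_pow_self (p : ℕ) [Fact p.Prime] (n : ℕ) :
    padicNorm p ((p:ℚ)^n) = ((p:ℚ))⁻¹ ^ n := by
  induction n with
  | zero => simp [padicNorm.one]
  | succ k ih =>
    rw [pow_succ, padicNorm.mul, ih, padicNorm.padicNorm_p (Fact.out : p.Prime).one_lt, pow_succ]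

lemma int_case (n : ℤ) (hn : n ≠ 0) :
    ∃ m : ℤ, 0 < m ∧ Int.gcd m 6 = 1 ∧
      |(n:ℚ)| * padicNorm 2 (n:ℚ) * padicNorm 3 (n:ℚ) = (m:ℚ) := by
  set N := n.natAbs with hN
  have hN0 : N ≠ 0 := Int.natAbs_ne_zero.mpr hn
  set v2 := N.factorization 2 with hv2
  set v3 := N.factorization 3 with hv3
  have h2 : N = 2^v2 * (N / 2^v2) := (Nat.ordProj_mul_ordCompl_eq_self N 2).symm
  set M0 := N / 2^v2 with hM0
  have hM0nd : ¬ 2 ∣ M0 := Nat.not_dvd_ordCompl Nat.prime_two hN0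
  have hM00 : M0 ≠ 0 := (Nat.ordCompl_pos 2 hN0).ne'
  have hfac : M0.factorization 3 = v3 := by
    rw [hM0, Nat.factorization_ordCompl N 2, Finsupp.erase_ne (by norm_num)]
  have h3 : M0 = 3^v3 * (M0 / 3^v3) := by
    rw [← hfac]; exact (Nat.ordProj_mul_ordCompl_eq_self M0 3).symm
  set M := M0 / 3^v3 with hM
  have hMnd3 : ¬ 3 ∣ M := by
    rw [hM, ← hfac]; exact Nat.not_dvd_ordCompl Nat.prime_three hM00
  have hMnd2 : ¬ 2 ∣ M := fun h => hM0nd (h3 ▸ h.mul_left _)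
  have hM0' : M ≠ 0 := by intro h; rw [h, mul_zero] at h3; exact hM00 h3
  -- key decomposition over ℚ
  have habs : |(n:ℚ)| = ((2:ℚ)^v2 * 3^v3 * M) := by
    rw [← Int.cast_abs, Int.abs_eq_natAbs, ← hN]
    push_cast [h2.trans (by rw [h3]; ring : 2^v2 * M0 = 2^v2 * 3^v3 * M)]
    ring
  have hnn : padicNorm 2 (n:ℚ) = padicNorm 2 |(n:ℚ)| := by
    rcases abs_choice (n:ℚ) with h | h <;> rw [h]
    · rw [padicNorm.neg]
  have hnn3 : padicNorm 3 (n:ℚ) = padicNorm 3 |(n:ℚ)| := by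
    rcases abs_choice (n:ℚ) with h | h <;> rw [h]
    · rw [padicNorm.neg]
  have hp2 : padicNorm 2 (n:ℚ) = (2:ℚ)⁻¹ ^ v2 := by
    rw [hnn, habs, padicNorm.mul, padicNorm.mul]
    rw [show ((2:ℚ))^v2 = ((2:ℕ):ℚ)^v2 by norm_num, padicNorm_pow_self]
    rw [show ((3:ℚ))^v3 = (((3^v3 : ℕ)):ℚ) by push_cast; ring,
      (padicNorm.nat_eq_one_iff _).mpr (by
        intro h; exact absurd (Nat.Prime.dvd_of_dvd_pow Nat.prime_two h) (by norm_num)),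
      (padicNorm.nat_eq_one_iff M).mpr hMnd2]
    push_cast; ring
  have hp3 : padicNorm 3 (n:ℚ) = (3:ℚ)⁻¹ ^ v3 := by
    rw [hnn3, habs, padicNorm.mul, padicNorm.mul]
    rw [show ((3:ℚ))^v3 = ((3:ℕ):ℚ)^v3 by norm_num, padicNorm_pow_self]
    rw [show ((2:ℚ))^v2 = (((2^v2 : ℕ)):ℚ) by push_cast; ring,
      (padicNorm.nat_eq_one_iff _).mpr (by
        intro h; exact absurd (Nat.Prime.dvd_of_dvd_pow Nat.prime_three h) (by norm_num)),
      (padicNorm.nat_eq_one_iff M).mpr hMnd3]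
    push_cast; ring
  refine ⟨M, by positivity, ?_, ?_⟩
  · have c2 : Nat.Coprime M 2 := ((Nat.Prime.coprime_iff_not_dvd Nat.prime_two).mpr hMnd2).symm
    have c3 : Nat.Coprime M 3 := ((Nat.Prime.coprime_iff_not_dvd Nat.prime_three).mpr hMnd3).symm
    have : Nat.Coprime M 6 := by
      have := Nat.Coprime.mul_right c2 c3
      simpa using this
    simpa [Int.gcd] using this
  · rw [habs, hp2, hp3]
    field_simp
    rw [one_div_pow, one_div_pow, Int.cast_natCast, mul_one_div, mul_one_div, div_div,
      div_eq_iff (by positivity)]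
    ring

lemma pow23_nat_inj {x y u v : ℕ} (h : 2^x*3^y = 2^u*3^v) : x = u ∧ y = v := by
  have h2 := congrArg (fun n => n.factorization 2) h
  have h3 := congrArg (fun n => n.factorization 3) h
  simp [Nat.factorization_mul, pow_ne_zero, Nat.Prime.factorization_pow,
    Nat.prime_two, Nat.prime_three, Finsupp.single_apply] at h2 h3
  exact ⟨h2, h3⟩

lemma f_two_pow (k : ℕ) :
    |(2:ℚ)^k| * padicNorm 2 ((2:ℚ)^k) * padicNorm 3 ((2:ℚ)^k) = 1 := by
  rw [abs_of_nonneg (by positivity),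
    show ((2:ℚ))^k = ((2:ℕ):ℚ)^k by norm_num, padicNorm_pow_self,
    show (((2:ℕ)):ℚ)^k = (((2^k : ℕ)):ℚ) by push_cast; ring,
    (padicNorm.nat_eq_one_iff _).mpr (by
      intro h; exact absurd (Nat.Prime.dvd_of_dvd_pow Nat.prime_three h) (by norm_num))]
  push_cast
  rw [mul_one, ← mul_pow]
  norm_num

lemma f_three_pow (k : ℕ) :
    |(3:ℚ)^k| * padicNorm 2 ((3:ℚ)^k) * padicNorm 3 ((3:ℚ)^k) = 1 := by
  rw [abs_of_nonneg (by positivity)]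
  rw [show ((3:ℚ))^k = ((3:ℕ):ℚ)^k by norm_num]
  rw [padicNorm_pow_self]
  rw [show (((3:ℕ)):ℚ)^k = (((3^k : ℕ)):ℚ) by push_cast; ring,
    (padicNorm.nat_eq_one_iff _).mpr (by
      intro h; exact absurd (Nat.Prime.dvd_of_dvd_pow Nat.prime_two h) (by norm_num))]
  push_cast
  rw [mul_one, mul_comm, ← mul_pow]
  norm_num

theorem stmt_0 (a b : ℤ) (hab : ¬(a = 0 ∧ b = 0)) :
    ∃ m : ℤ, 0 < m ∧ Int.gcd m 6 = 1 ∧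
      |(2 : ℚ) ^ a * 3 ^ b - 1| * padicNorm 2 ((2 : ℚ) ^ a * 3 ^ b - 1) *
        padicNorm 3 ((2 : ℚ) ^ a * 3 ^ b - 1) = (m : ℚ) := by
  set ap := a.toNat with hap
  set am := (-a).toNat with ham
  set bp := b.toNat with hbp
  set bm := (-b).toNat with hbm
  set n : ℤ := 2^ap * 3^bp - 2^am * 3^bm with hn
  set q : ℚ := (2:ℚ)^a * 3^b - 1 with hq
  have h2 : (2:ℚ)^a * (2:ℚ)^am = (2:ℚ)^ap := by
    rw [← zpow_natCast (2:ℚ) am, ← zpow_natCast (2:ℚ) ap, ← zpow_add₀ (by norm_num : (2:ℚ) ≠ 0)]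
    congr 1; omega
  have h3 : (3:ℚ)^b * (3:ℚ)^bm = (3:ℚ)^bp := by
    rw [← zpow_natCast (3:ℚ) bm, ← zpow_natCast (3:ℚ) bp, ← zpow_add₀ (by norm_num : (3:ℚ) ≠ 0)]
    congr 1; omega
  have hkey : (n:ℚ) = q * ((2:ℚ)^am * (3:ℚ)^bm) := by
    rw [hq, hn]
    push_cast
    rw [sub_mul, one_mul]
    congr 1
    rw [← h2, ← h3]
    ring
  have hn0 : n ≠ 0 := by
    intro h
    rw [hn, sub_eq_zero] at h
    have hnat : (2:ℕ)^ap * 3^bp = 2^am * 3^bm := by exact_mod_cast h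
    obtain ⟨e1, e2⟩ := pow23_nat_inj hnat
    exact hab ⟨by omega, by omega⟩
  obtain ⟨m, hm1, hm2, hm3⟩ := int_case n hn0
  refine ⟨m, hm1, hm2, ?_⟩
  rw [hkey] at hm3
  have expand : |q * ((2:ℚ)^am * (3:ℚ)^bm)| * padicNorm 2 (q * ((2:ℚ)^am * (3:ℚ)^bm)) *
      padicNorm 3 (q * ((2:ℚ)^am * (3:ℚ)^bm)) =
      (|q| * padicNorm 2 q * padicNorm 3 q) *
      ((|(2:ℚ)^am| * padicNorm 2 ((2:ℚ)^am) * padicNorm 3 ((2:ℚ)^am)) *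
       (|(3:ℚ)^bm| * padicNorm 2 ((3:ℚ)^bm) * padicNorm 3 ((3:ℚ)^bm))) := by
    rw [abs_mul, abs_mul, padicNorm.mul, padicNorm.mul, padicNorm.mul, padicNorm.mul]
    ring
  rw [expand, f_two_pow, f_three_pow, mul_one, mul_one] at hm3
  exact hm3
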